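/- Let each agent a be equipped with a strict partial order ≻'_a on the houses (set-compare partial preferences). A matching M is necessarily Pareto optimal if and only if there do not exist k ≥ 2 and distinct agents a_1, …, a_k such that, with indices taken modulo k, for every i ∈ {1,…,k} there exists a linear extension ≻_{a_i} of ≻'_{a_i} with M(a_{i+1}) ≻_{a_i} M(a_i) (equivalently, for every i it does not hold that M(a_i) ≻'_{a_i} M(a_{i+1})). -/

import Mathlib

-- wrapper type to install a custom linear order
def RankWrap (n : ℕ) : Type := Fin n

instance (n : ℕ) : Fintype (RankWrap n) := inferInstanceAs (Fintype (Fin n))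

def rankWrapEquiv (n : ℕ) : Fin n ≃ RankWrap n := Equiv.refl (Fin n)

lemma rankWrap_card (n : ℕ) : Fintype.card (RankWrap n) = n := Fintype.card_fin n

/-- Any strict order on `Fin n` has a rank equiv extending it. -/
lemma exists_rank {n : ℕ} (r : Fin n → Fin n → Prop) (hr : IsStrictOrder (Fin n) r) :
    ∃ P : Fin n ≃ Fin n, ∀ h h', r h h' → P h < P h' := by
  classical
  set r' : Fin n → Fin n → Prop := fun a b => a = b ∨ r a b with hr'
  haveI : IsRefl (Fin n) r' := ⟨fun _ => Or.inl rfl⟩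
  haveI : IsTrans (Fin n) r' := by
    constructor
    intro a b c hab hbc
    rcases hab with rfl | hab
    · exact hbc
    rcases hbc with rfl | hbc
    · exact Or.inr hab
    · exact Or.inr (hr.trans _ _ _ hab hbc)
  haveI : IsAntisymm (Fin n) r' := by
    constructor
    intro a b hab hba
    rcases hab with rfl | hab
    · rfl
    rcases hba with rfl | hba
    · rfl
    · exact absurd (hr.trans _ _ _ hab hba) (hr.irrefl a)
  haveI : IsPartialOrder (Fin n) r' := { }
  obtain ⟨s, hs, hsub⟩ := extend_partialOrder r'
  letI : LinearOrder (RankWrap n) :=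
    { le := s
      le_refl := hs.refl
      le_trans := hs.trans
      le_antisymm := hs.antisymm
      le_total := hs.total
      toDecidableLE := Classical.decRel s }
  have e := monoEquivOfFin (RankWrap n) (rankWrap_card n)
  refine ⟨((rankWrapEquiv n).trans e.toEquiv.symm), ?_⟩
  intro h h' hhh'
  have hne : h ≠ h' := by rintro rfl; exact hr.irrefl h hhh'
  have hlt : (rankWrapEquiv n h : RankWrap n) < rankWrapEquiv n h' := by
    refine lt_of_le_of_ne (hsub _ _ (Or.inr hhh')) ?_
    exact fun hEq => hne hEq
  simpa using e.symm.strictMono hlt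

/-- Extend a strict order placing `x` strictly before `y`, when allowed. -/
lemma exists_rank_pair {n : ℕ} (r : Fin n → Fin n → Prop) (hr : IsStrictOrder (Fin n) r)
    {x y : Fin n} (hxy : x ≠ y) (hnot : ¬ r y x) :
    ∃ P : Fin n ≃ Fin n, (∀ h h', r h h' → P h < P h') ∧ P x < P y := by
  set r₂ : Fin n → Fin n → Prop :=
    fun a b => r a b ∨ (a = x ∨ r a x) ∧ (b = y ∨ r y b) with hr₂
  have hyx : ∀ b, (b = y ∨ r y b) → (b = x ∨ r b x) → False := by
    rintro b (rfl | hyb) (rfl | hbx)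
    · exact hxy rfl
    · exact hnot hbx
    · exact hnot hyb
    · exact hnot (hr.trans _ _ _ hyb hbx)
  haveI hirr : IsIrrefl (Fin n) r₂ := by
    constructor
    rintro a (ha | ⟨ha1, ha2⟩)
    · exact hr.irrefl a ha
    · exact hyx a ha2 ha1
  haveI htr : IsTrans (Fin n) r₂ := by
    constructor
    rintro a b c (hab | ⟨hab1, hab2⟩) (hbc | ⟨hbc1, hbc2⟩)
    · exact Or.inl (hr.trans _ _ _ hab hbc)
    · refine Or.inr ⟨?_, hbc2⟩
      rcases hbc1 with rfl | hbx
      · exact Or.inr hab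
      · exact Or.inr (hr.trans _ _ _ hab hbx)
    · refine Or.inr ⟨hab1, ?_⟩
      rcases hab2 with rfl | hyb
      · exact Or.inr hbc
      · exact Or.inr (hr.trans _ _ _ hyb hbc)
    · exact (hyx b hab2 hbc1).elim
  have h2 : IsStrictOrder (Fin n) r₂ := { }
  obtain ⟨P, hP⟩ := exists_rank r₂ h2
  exact ⟨P, fun h h' hhh' => hP _ _ (Or.inl hhh'), hP _ _ (Or.inr ⟨Or.inl rfl, Or.inl rfl⟩)⟩



/-!
Agents and houses are `Fin n`.  Set-compare partial preferences are strict partial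
orders `R a` on houses (`R a h h'` means `h ≻'_a h'`).  A completion is a complete
strict profile, given by rank functions `P a : Fin n ≃ Fin n` (0-based rank; lower
rank = more preferred), that linearly extends every `R a`.
A matching is a bijection `M : Equiv.Perm (Fin n)` from agents to houses.
-/

/-- `M'` dominates `M` under the complete profile `P`. -/
def Dominates {n : ℕ} (P : Fin n → (Fin n ≃ Fin n)) (M' M : Equiv.Perm (Fin n)) : Prop :=
  (∀ a, P a (M' a) ≤ P a (M a)) ∧ ∃ a, P a (M' a) < P a (M a)

/-- `M` is Pareto optimal under the complete profile `P`. -/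
def ParetoOptimal {n : ℕ} (P : Fin n → (Fin n ≃ Fin n)) (M : Equiv.Perm (Fin n)) : Prop :=
  ¬ ∃ M' : Equiv.Perm (Fin n), Dominates P M' M

/-- The complete profile `P` is a completion of the set-compare partial preferences
`R`, i.e. each `P a` induces a linear extension of the strict partial order `R a`. -/
def SCCompletion {n : ℕ} (R : Fin n → Fin n → Fin n → Prop)
    (P : Fin n → (Fin n ≃ Fin n)) : Prop :=
  ∀ a h h', R a h h' → P a h < P a h'

/-- A matching `M` is necessarily Pareto optimal for set-compare partial preferences
`R` iff there is no cycle of `k ≥ 2` distinct agents `a_0, …, a_{k-1}` (an injective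
`f : ZMod k → Fin n`) such that, cyclically, for every `i` it does not hold that
`M (f i) ≻'_{f i} M (f (i+1))` (equivalently, some linear extension of `≻'_{f i}`
places `M (f (i+1))` above `M (f i)`). -/
theorem npo_setcompare_iff_no_cycle {n : ℕ}
    (R : Fin n → Fin n → Fin n → Prop)
    (hR : ∀ a, IsStrictOrder (Fin n) (R a))
    (M : Equiv.Perm (Fin n)) :
    (∀ P : Fin n → (Fin n ≃ Fin n), SCCompletion R P → ParetoOptimal P M) ↔
      ¬ ∃ k : ℕ, 2 ≤ k ∧ ∃ f : ZMod k → Fin n, Function.Injective f ∧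
          ∀ i : ZMod k, ¬ R (f i) (M (f i)) (M (f (i + 1))) := by
  classical
  constructor
  · rintro hNPO ⟨k, hk, f, hf, hcyc⟩
    haveI : NeZero k := ⟨by omega⟩
    have hone : (1 : ZMod k) ≠ 0 := by
      intro h
      have h1 : (1 : ZMod k).val = 1 := ZMod.val_one'' (by omega)
      rw [h] at h1
      simp at h1
    have hsucc : ∀ i : ZMod k, f (i + 1) ≠ f i := by
      intro i h
      exact hone (add_eq_left.mp (hf h))
    have hchoice : ∀ a : Fin n, ∃ Pa : Fin n ≃ Fin n,
        (∀ h h', R a h h' → Pa h < Pa h') ∧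
        ∀ i : ZMod k, f i = a → Pa (M (f (i + 1))) < Pa (M (f i)) := by
      intro a
      by_cases hmem : ∃ i, f i = a
      · obtain ⟨i, rfl⟩ := hmem
        obtain ⟨Pa, h1, h2⟩ := exists_rank_pair (R (f i)) (hR _)
          (x := M (f (i + 1))) (y := M (f i)) (M.injective.ne (hsucc i)) (hcyc i)
        refine ⟨Pa, h1, ?_⟩
        intro j hj
        have hji : j = i := hf hj
        subst hji; exact h2
      · obtain ⟨Pa, h1⟩ := exists_rank (R a) (hR a)
        exact ⟨Pa, h1, fun i hi => absurd ⟨i, hi⟩ hmem⟩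
    choose P hP1 hP2 using hchoice
    set σ : Equiv.Perm (ZMod k) := Equiv.addRight 1 with hσ
    set c : Equiv.Perm (Fin n) := σ.extendDomain (Equiv.ofInjective f hf) with hc
    have hc_mem : ∀ i, c (f i) = f (i + 1) := by
      intro i
      have h := Equiv.Perm.extendDomain_apply_image σ (Equiv.ofInjective f hf) i
      simpa [σ, hc, Equiv.ofInjective] using h
    have hc_not : ∀ a, (∀ i, f i ≠ a) → c a = a := by
      intro a ha
      refine Equiv.Perm.extendDomain_apply_not_subtype σ (Equiv.ofInjective f hf) ?_
      rintro ⟨i, rfl⟩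
      exact ha i rfl
    set M' : Equiv.Perm (Fin n) := c.trans M with hM'
    refine hNPO P (fun a h h' hr => hP1 a h h' hr) ⟨M', ?_, ?_⟩
    · intro a
      by_cases hmem : ∃ i, f i = a
      · obtain ⟨i, rfl⟩ := hmem
        have : M' (f i) = M (f (i + 1)) := by
          simp [hM', Equiv.trans_apply, hc_mem i]
        rw [this]
        exact le_of_lt (hP2 (f i) i rfl)
      · push_neg at hmem
        have : M' a = M a := by simp [hM', Equiv.trans_apply, hc_not a hmem]
        rw [this]
    · refine ⟨f 0, ?_⟩
      have : M' (f 0) = M (f (0 + 1)) := by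
        simp [hM', Equiv.trans_apply, hc_mem 0]
      rw [this]
      exact hP2 (f 0) 0 rfl
  · rintro hnc P hcomp ⟨M', hle, a₀, hlt⟩
    apply hnc
    set π : Equiv.Perm (Fin n) := M'.trans M.symm with hπ
    have hMπ : ∀ a, M (π a) = M' a := fun a => M.apply_symm_apply _
    have hπa₀ : π a₀ ≠ a₀ := by
      intro h
      have hMa : M' a₀ = M a₀ := by rw [← hMπ, h]
      rw [hMa] at hlt
      exact lt_irrefl _ hlt
    have hper : a₀ ∈ Function.periodicPts π := by
      refine ⟨orderOf π, orderOf_pos π, ?_⟩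
      show π^[orderOf π] a₀ = a₀
      rw [Equiv.Perm.iterate_eq_pow, pow_orderOf_eq_one]
      rfl
    set k : ℕ := Function.minimalPeriod π a₀ with hkdef
    have hkpos : 0 < k := Function.minimalPeriod_pos_of_mem_periodicPts hper
    have hk1 : k ≠ 1 := by
      intro h
      have := Function.isPeriodicPt_minimalPeriod π a₀
      rw [← hkdef, h] at this
      exact hπa₀ this
    have hk2 : 2 ≤ k := by omega
    haveI : NeZero k := ⟨by omega⟩
    refine ⟨k, hk2, fun i => π^[i.val] a₀, ?_, ?_⟩
    · intro i j hij
      have hi : i.val < k := ZMod.val_lt i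
      have hj : j.val < k := ZMod.val_lt j
      exact ZMod.val_injective k
        (Function.iterate_injOn_Iio_minimalPeriod hi hj hij)
    · intro i hRi
      have hval : (i + 1 : ZMod k).val = (i.val + 1) % k := by
        rw [ZMod.val_add, ZMod.val_one'' hk1]
      have hiter : π^[(i + 1 : ZMod k).val] a₀ = π (π^[i.val] a₀) := by
        rw [hval, Function.iterate_mod_minimalPeriod_eq, Function.iterate_succ_apply']
      beta_reduce at hRi
      rw [hiter, hMπ] at hRi
      exact absurd (hle _) (not_le.mpr (hcomp _ _ _ hRi))
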